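/- Let Γ be the group of affine bijections of ℝ generated by three reflections x ↦ a−x, x ↦ b−x, x ↦ c−x with a, b, c distinct integers. Then Γ is isomorphic to the infinite dihedral group, and its subgroup of translations is generated by translation by gcd(b−a, c−b) (i.e., equals gcd(b−a,c−b)·ℤ acting by translations). -/

import Mathlib

/-- The reflection `x ↦ t − x` of the real line. -/
def reflAt (t : ℝ) : Equiv.Perm ℝ where
  toFun x := t - x
  invFun x := t - x
  left_inv x := by ring
  right_inv x := by ring

namespace Aux14

def zi (k : ZMod 0) : ℤ := k

def zc (k : ZMod 0) : ℝ := (zi k : ℝ)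

lemma zc_add (i j : ZMod 0) : zc (i + j) = zc i + zc j := by
  simp only [zc, show zi (i + j) = zi i + zi j from rfl, Int.cast_add]

lemma zc_sub (i j : ZMod 0) : zc (i - j) = zc i - zc j := by
  simp only [zc, show zi (i - j) = zi i - zi j from rfl, Int.cast_sub]

lemma zc_zero : zc 0 = 0 := by simp [zc, show zi 0 = 0 from rfl]

lemma zc_intCast (n : ℤ) : zc (n : ZMod 0) = (n : ℝ) := by
  simp [zc, show zi (n : ZMod 0) = n from rfl]

lemma reflAt_apply (t x : ℝ) : reflAt t x = t - x := rfl

lemma addRight_mul (s t : ℝ) :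
    Equiv.addRight s * Equiv.addRight t = Equiv.addRight (t + s) := by
  ext x; simp [Equiv.Perm.mul_apply]

lemma addRight_inv (t : ℝ) : (Equiv.addRight t)⁻¹ = Equiv.addRight (-t) := by
  ext x; simp [Equiv.Perm.inv_def]

lemma refl_mul_refl (s t : ℝ) : reflAt s * reflAt t = Equiv.addRight (s - t) := by
  ext x; simp [Equiv.Perm.mul_apply, reflAt]; ring

lemma refl_mul_addRight (s t : ℝ) : reflAt s * Equiv.addRight t = reflAt (s - t) := by
  ext x; simp [Equiv.Perm.mul_apply, reflAt]; ring

lemma addRight_mul_refl (s t : ℝ) : Equiv.addRight t * reflAt s = reflAt (s + t) := by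
  ext x; simp [Equiv.Perm.mul_apply, reflAt]; ring

lemma addRight_zpow (t : ℝ) (n : ℤ) :
    (Equiv.addRight t) ^ n = Equiv.addRight (n * t) := by
  induction n using Int.induction_on with
  | zero => ext x; simp
  | succ k ih => rw [zpow_add_one, ih, addRight_mul]; congr 1; push_cast; ring
  | pred k ih => rw [zpow_sub_one, ih, addRight_inv, addRight_mul]; congr 1; push_cast; ring

def dmap (a g : ℝ) : DihedralGroup 0 →* Equiv.Perm ℝ where
  toFun x := match x with
    | .r k => Equiv.addRight (-(zc k * g))
    | .sr k => reflAt (a + zc k * g)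
  map_one' := by
    show Equiv.addRight (-(zc 0 * g)) = 1
    ext x; simp [zc_zero]
  map_mul' x y := by
    rcases x with i | i <;> rcases y with j | j <;>
      simp only [DihedralGroup.r_mul_r, DihedralGroup.r_mul_sr,
        DihedralGroup.sr_mul_r, DihedralGroup.sr_mul_sr] <;>
      simp only [addRight_mul, refl_mul_refl, refl_mul_addRight, addRight_mul_refl] <;>
      congr 1 <;> simp only [zc_add, zc_sub] <;> ring

lemma dmap_r (a g : ℝ) (k : ZMod 0) :
    dmap a g (.r k) = Equiv.addRight (-(zc k * g)) := rfl

lemma dmap_sr (a g : ℝ) (k : ZMod 0) :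
    dmap a g (.sr k) = reflAt (a + zc k * g) := rfl

lemma dmap_injective {a g : ℝ} (hg : g ≠ 0) : Function.Injective (dmap a g) := by
  intro x y h
  rcases x with i | i <;> rcases y with j | j <;>
    simp only [dmap_r, dmap_sr] at h
  · have h0 := Equiv.ext_iff.mp h 0
    simp only [Equiv.coe_addRight] at h0
    have : zc i = zc j := by
      have h1 : zc i * g = zc j * g := by linarith
      exact mul_right_cancel₀ hg h1
    have : zi i = zi j := Int.cast_injective this
    exact congrArg DihedralGroup.r (show i = j from this)
  · exfalso
    have h0 := Equiv.ext_iff.mp h 0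
    have h1 := Equiv.ext_iff.mp h 1
    simp only [Equiv.coe_addRight, reflAt_apply] at h0 h1
    linarith
  · exfalso
    have h0 := Equiv.ext_iff.mp h 0
    have h1 := Equiv.ext_iff.mp h 1
    simp only [Equiv.coe_addRight, reflAt_apply] at h0 h1
    linarith
  · have h0 := Equiv.ext_iff.mp h 0
    simp only [reflAt_apply] at h0
    have : zc i = zc j := by
      have : zc i * g = zc j * g := by linarith
      exact mul_right_cancel₀ hg this
    have : zi i = zi j := Int.cast_injective this
    exact congrArg DihedralGroup.sr (show i = j from this)

end Aux14


open Aux14 in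
/-- The group generated by three reflections `x ↦ a−x`, `x ↦ b−x`, `x ↦ c−x`
with `a, b, c` distinct integers is infinite dihedral, and its translations are
exactly the translations by multiples of `gcd (b−a) (c−b)`. -/
theorem stmt_14 (a b c : ℤ) (hab : a ≠ b) (hbc : b ≠ c) (hac : a ≠ c)
    (Γ : Subgroup (Equiv.Perm ℝ))
    (hΓ : Γ = Subgroup.closure {reflAt (a : ℝ), reflAt (b : ℝ), reflAt (c : ℝ)}) :
    Nonempty (Γ ≃* DihedralGroup 0) ∧
    ∀ t : ℝ, (Equiv.addRight t ∈ Γ ↔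
      ∃ k : ℤ, t = (k : ℝ) * ((Int.gcd (b - a) (c - b) : ℤ) : ℝ)) := by
  set g : ℤ := (Int.gcd (b - a) (c - b) : ℤ) with hg
  have hba : b - a ≠ 0 := sub_ne_zero.mpr hab.symm
  have hgpos : 0 < g := by
    rw [hg]
    exact_mod_cast Int.gcd_pos_of_ne_zero_left (c - b) hba
  have hgR : (g : ℝ) ≠ 0 := by positivity
  set φ := dmap (a : ℝ) (g : ℝ) with hφ
  -- generators in Γ
  have hAmem : reflAt (a : ℝ) ∈ Γ := by
    rw [hΓ]; exact Subgroup.subset_closure (by simp)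
  have hBmem : reflAt (b : ℝ) ∈ Γ := by
    rw [hΓ]; exact Subgroup.subset_closure (by simp)
  have hCmem : reflAt (c : ℝ) ∈ Γ := by
    rw [hΓ]; exact Subgroup.subset_closure (by simp)
  -- translations by b-a and c-b in Γ
  have hTba : Equiv.addRight (((b - a : ℤ) : ℝ)) ∈ Γ := by
    have : reflAt (b : ℝ) * reflAt (a : ℝ) = Equiv.addRight (((b - a : ℤ) : ℝ)) := by
      rw [refl_mul_refl]; congr 1; push_cast; ring
    rw [← this]; exact mul_mem hBmem hAmem
  have hTcb : Equiv.addRight (((c - b : ℤ) : ℝ)) ∈ Γ := by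
    have : reflAt (c : ℝ) * reflAt (b : ℝ) = Equiv.addRight (((c - b : ℤ) : ℝ)) := by
      rw [refl_mul_refl]; congr 1; push_cast; ring
    rw [← this]; exact mul_mem hCmem hBmem
  -- translation by g in Γ (Bezout)
  have hTg : Equiv.addRight ((g : ℝ)) ∈ Γ := by
    have hbez : g = (b - a) * Int.gcdA (b - a) (c - b) + (c - b) * Int.gcdB (b - a) (c - b) :=
      Int.gcd_eq_gcd_ab (b - a) (c - b)
    have : Equiv.addRight ((g : ℝ)) =
        (Equiv.addRight (((b - a : ℤ) : ℝ))) ^ (Int.gcdA (b - a) (c - b)) *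
        (Equiv.addRight (((c - b : ℤ) : ℝ))) ^ (Int.gcdB (b - a) (c - b)) := by
      rw [addRight_zpow, addRight_zpow, addRight_mul]
      congr 1
      rw [hbez]; push_cast; ring
    rw [this]
    exact mul_mem (zpow_mem hTba _) (zpow_mem hTcb _)
  -- range of φ equals Γ
  have hTgn : ∀ n : ℤ, Equiv.addRight ((n : ℝ) * (g : ℝ)) ∈ Γ := by
    intro n
    rw [← addRight_zpow]
    exact zpow_mem hTg n
  have hrange : φ.range = Γ := by
    apply le_antisymm
    · rintro x ⟨d, rfl⟩
      rcases d with k | k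
      · rw [hφ, dmap_r]
        have : -(zc k * (g : ℝ)) = ((-(zi k) : ℤ) : ℝ) * (g : ℝ) := by
          simp only [zc]; push_cast; ring
        rw [this]; exact hTgn _
      · rw [hφ, dmap_sr, ← addRight_mul_refl]
        have : zc k * (g : ℝ) = ((zi k : ℤ) : ℝ) * (g : ℝ) := by simp [zc]
        rw [this]
        exact mul_mem (hTgn _) hAmem
    · rw [hΓ, Subgroup.closure_le]
      rintro x (rfl | rfl | rfl)
      · exact ⟨.sr 0, by rw [hφ, dmap_sr, zc_zero]; congr 1; ring⟩
      · refine ⟨.sr (((b - a) / g : ℤ) : ZMod 0), ?_⟩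
        show reflAt ((a : ℝ) + (((b - a) / g : ℤ) : ℝ) * (g : ℝ)) = reflAt (b : ℝ)
        congr 1
        have hdvd : g ∣ b - a := Int.gcd_dvd_left (b - a) (c - b)
        have : ((b - a) / g) * g = b - a := Int.ediv_mul_cancel hdvd
        have hr : (((b - a) / g : ℤ) : ℝ) * (g : ℝ) = ((b - a : ℤ) : ℝ) := by
          rw [← Int.cast_mul, this]
        rw [hr]; push_cast; ring
      · refine ⟨.sr (((c - a) / g : ℤ) : ZMod 0), ?_⟩
        show reflAt ((a : ℝ) + (((c - a) / g : ℤ) : ℝ) * (g : ℝ)) = reflAt (c : ℝ)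
        congr 1
        have hdvd : g ∣ c - a := by
          have h1 : g ∣ b - a := Int.gcd_dvd_left (b - a) (c - b)
          have h2 : g ∣ c - b := Int.gcd_dvd_right (b - a) (c - b)
          have := dvd_add h1 h2
          simpa [sub_add_sub_cancel'] using this
        have : ((c - a) / g) * g = c - a := Int.ediv_mul_cancel hdvd
        have hr : (((c - a) / g : ℤ) : ℝ) * (g : ℝ) = ((c - a : ℤ) : ℝ) := by
          rw [← Int.cast_mul, this]
        rw [hr]; push_cast; ring
  constructor
  · exact ⟨(MulEquiv.subgroupCongr hrange.symm).trans
      (MonoidHom.ofInjective (dmap_injective hgR)).symm⟩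
  · intro t
    constructor
    · intro ht
      rw [← hrange] at ht
      obtain ⟨d, hd⟩ := ht
      rcases d with k | k
      · rw [hφ, dmap_r] at hd
        have h0 := Equiv.ext_iff.mp hd 0
        simp only [Equiv.coe_addRight] at h0
        refine ⟨-(zi k), ?_⟩
        push_cast
        simp [zc] at h0
        linarith
      · exfalso
        rw [hφ, dmap_sr] at hd
        have h0 := Equiv.ext_iff.mp hd 0
        have h1 := Equiv.ext_iff.mp hd 1
        simp only [Equiv.coe_addRight, reflAt_apply] at h0 h1
        linarith
    · rintro ⟨k, rfl⟩
      exact hTgn k
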